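/- Let P(λ) = λ(J₁+R₁) + (J₂+R₂) be an n×n complex posH pencil. If the skew-Hermitian pencil λJ₁ + J₂ is regular, i.e., det(μJ₁ + J₂) ≠ 0 for some μ ∈ ℂ, then P(λ) is regular, and every real positive eigenvalue of P(λ) is also an eigenvalue of λJ₁ + J₂: for every real α > 0 with det(α(J₁+R₁) + (J₂+R₂)) = 0 one has det(αJ₁ + J₂) = 0. -/

import Mathlib

open Matrix
open scoped ComplexOrder

private lemma key_lemma {n : ℕ}
    (J₁ J₂ R₁ R₂ : Matrix (Fin n) (Fin n) ℂ)
    (hJ₁ : J₁ᴴ = -J₁) (hJ₂ : J₂ᴴ = -J₂)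
    (hR₁ : R₁.PosSemidef) (hR₂ : R₂.PosSemidef)
    (α : ℝ) (hα : 0 < α)
    (h : ((α : ℂ) • (J₁ + R₁) + (J₂ + R₂)).det = 0) :
    ((α : ℂ) • J₁ + J₂).det = 0 := by
  set K : Matrix (Fin n) (Fin n) ℂ := (α : ℂ) • J₁ + J₂ with hK
  set S : Matrix (Fin n) (Fin n) ℂ := (α : ℂ) • R₁ + R₂ with hS
  have hM : (α : ℂ) • (J₁ + R₁) + (J₂ + R₂) = K + S := by
    simp only [hK, hS, smul_add]; abel
  rw [hM] at h
  obtain ⟨x, hx0, hx⟩ := Matrix.exists_mulVec_eq_zero_iff.mpr h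
  -- S is PSD
  have hαR₁ : ((α : ℂ) • R₁).PosSemidef := by
    rw [posSemidef_iff_dotProduct_mulVec]
    constructor
    · rw [Matrix.IsHermitian, conjTranspose_smul, hR₁.1.eq]
      norm_num
    · intro y
      rw [Matrix.smul_mulVec, dotProduct_smul]
      exact mul_nonneg (by positivity) (hR₁.dotProduct_mulVec_nonneg y)
  have hSpsd : S.PosSemidef := hαR₁.add hR₂
  -- K is skew-Hermitian
  have hKskew : Kᴴ = -K := by
    rw [hK, conjTranspose_add, conjTranspose_smul, hJ₁, hJ₂]
    simp only [smul_neg, Complex.star_def, Complex.conj_ofReal]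
    abel
  -- quadratic form vanishes
  have hq : star x ⬝ᵥ (K + S) *ᵥ x = 0 := by rw [hx, dotProduct_zero]
  rw [Matrix.add_mulVec, dotProduct_add] at hq
  set k := star x ⬝ᵥ K *ᵥ x with hkdef
  set s := star x ⬝ᵥ S *ᵥ x with hsdef
  have hkstar : star k = -k := by
    rw [hkdef, ← star_dotProduct, star_mulVec, hKskew, dotProduct_mulVec]
    rw [Matrix.vecMul_neg, neg_dotProduct]
  have hsstar : star s = s := by
    rw [hsdef, ← star_dotProduct, star_mulVec, hSpsd.1.eq, dotProduct_mulVec]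
  have hs : s = 0 := by
    have hks : k = -s := by linear_combination hq
    have h1 : star s = -s := by
      rw [hks, star_neg, neg_neg] at hkstar
      linear_combination -hkstar
    have h2 : s + s = 0 := by
      have := hsstar.symm.trans h1
      linear_combination this
    linear_combination h2 / 2
  have hSx : S *ᵥ x = 0 := (hSpsd.dotProduct_mulVec_zero_iff x).mp hs
  have hKx : K *ᵥ x = 0 := by
    have := hx
    rw [Matrix.add_mulVec, hSx, add_zero] at this
    exact this
  exact Matrix.exists_mulVec_eq_zero_iff.mp ⟨x, hx0, hKx⟩

theorem posH_regular_of_skew_part_regular {n : ℕ}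
    (J₁ J₂ R₁ R₂ : Matrix (Fin n) (Fin n) ℂ)
    (hJ₁ : J₁ᴴ = -J₁) (hJ₂ : J₂ᴴ = -J₂)
    (hR₁ : R₁.PosSemidef) (hR₂ : R₂.PosSemidef)
    (hreg : ∃ μ : ℂ, (μ • J₁ + J₂).det ≠ 0) :
    (∃ μ : ℂ, (μ • (J₁ + R₁) + (J₂ + R₂)).det ≠ 0) ∧
    (∀ α : ℝ, 0 < α → ((α : ℂ) • (J₁ + R₁) + (J₂ + R₂)).det = 0 →
      ((α : ℂ) • J₁ + J₂).det = 0) := by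
  refine ⟨?_, fun α hα h => key_lemma J₁ J₂ R₁ R₂ hJ₁ hJ₂ hR₁ hR₂ α hα h⟩
  by_contra hP
  push_neg at hP
  obtain ⟨μ, hμ⟩ := hreg
  -- the polynomial z ↦ det (z • J₁ + J₂)
  set p : Polynomial ℂ :=
    ((Polynomial.X : Polynomial ℂ) • J₁.map Polynomial.C + J₂.map Polynomial.C).det with hp
  have heval : ∀ z : ℂ, p.eval z = ((z • J₁ + J₂ : Matrix (Fin n) (Fin n) ℂ)).det := by
    intro z
    rw [hp, ← Polynomial.coe_evalRingHom, RingHom.map_det]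
    congr 1
    ext i j
    simp only [RingHom.mapMatrix_apply, Matrix.map_apply, Matrix.add_apply,
      Matrix.smul_apply, Polynomial.coe_evalRingHom, Polynomial.eval_add,
      smul_eq_mul, Polynomial.eval_mul, Polynomial.eval_X, Polynomial.eval_C]
  have hroots : {z : ℂ | p.IsRoot z}.Infinite := by
    apply Set.Infinite.mono (s := (fun r : ℝ => (r : ℂ)) '' Set.Ioi 0)
    · rintro z ⟨r, hr, rfl⟩
      have := key_lemma J₁ J₂ R₁ R₂ hJ₁ hJ₂ hR₁ hR₂ r hr (hP (r : ℂ))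
      simpa [Polynomial.IsRoot, heval] using this
    · exact (Set.Ioi_infinite 0).image (fun a _ b _ hab => by exact_mod_cast hab)
  have hp0 : p = 0 := p.eq_zero_of_infinite_isRoot hroots
  apply hμ
  rw [← heval, hp0, Polynomial.eval_zero]
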